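/- Let 0 < r < 1, let z ∈ ℂ with |z| = 1, and let k ≥ 1 be an integer. Then the series Σ_{m ∈ ℤ, m ≠ 0} r^{|m−k|} z^m / m converges and equals r^k · Log(1 − r z^{−1}) + Σ_{m=1}^{k} (r^{k−m} − r^{m−k}) z^m / m − r^{−k} · Log(1 − r z), where Log denotes the principal branch of the complex logarithm. -/

import Mathlib

/-- For `0 < r < 1`, `|z| = 1` and an integer `k ≥ 1`, the series
`Σ_{m ∈ ℤ, m ≠ 0} r^{|m−k|} z^m / m` converges (unconditionally) to
`r^k Log(1 − r z⁻¹) + Σ_{m=1}^{k} (r^{k−m} − r^{m−k}) z^m / m − r^{−k} Log(1 − r z)`,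
where `Log` is the principal branch of the complex logarithm. -/
theorem hasSum_rpow_zpow_div (r : ℝ) (hr0 : 0 < r) (hr1 : r < 1) (z : ℂ)
    (hz : ‖z‖ = 1) (k : ℕ) (hk : 1 ≤ k) :
    HasSum
      (fun m : ℤ => if m = 0 then 0 else (r : ℂ) ^ (m - (k : ℤ)).natAbs * z ^ m / (m : ℂ))
      ((r : ℂ) ^ (k : ℤ) * Complex.log (1 - (r : ℂ) * z⁻¹) +
        (∑ m ∈ Finset.Icc 1 k,
          ((r : ℂ) ^ ((k : ℤ) - (m : ℤ)) - (r : ℂ) ^ ((m : ℤ) - (k : ℤ))) * z ^ (m : ℕ) / (m : ℂ)) -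
        (r : ℂ) ^ (-(k : ℤ)) * Complex.log (1 - (r : ℂ) * z)) := by
  set f : ℤ → ℂ := fun m : ℤ =>
    if m = 0 then 0 else (r : ℂ) ^ (m - (k : ℤ)).natAbs * z ^ m / (m : ℂ) with hf
  have hrC : (r : ℂ) ≠ 0 := by exact_mod_cast hr0.ne'
  have hz0 : z ≠ 0 := by
    intro h
    rw [h] at hz
    simp at hz
  have hrz : ‖(r : ℂ) * z‖ < 1 := by
    rw [norm_mul, Complex.norm_real, hz]
    simpa [abs_of_pos hr0] using hr1
  have hrzi : ‖(r : ℂ) * z⁻¹‖ < 1 := by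
    rw [norm_mul, Complex.norm_real, norm_inv, hz]
    simpa [abs_of_pos hr0] using hr1
  -- the two logarithmic series
  have h1 : HasSum (fun n : ℕ => ((r : ℂ) * z) ^ n / n) (-Complex.log (1 - r * z)) :=
    Complex.hasSum_taylorSeries_neg_log hrz
  have h2 : HasSum (fun n : ℕ => ((r : ℂ) * z⁻¹) ^ n / n) (-Complex.log (1 - r * z⁻¹)) :=
    Complex.hasSum_taylorSeries_neg_log hrzi
  have h1' : HasSum (fun n : ℕ => ((r : ℂ) * z) ^ (n + 1) / (n + 1))
      (-Complex.log (1 - r * z)) := by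
    have := (hasSum_nat_add_iff' (f := fun n : ℕ => ((r : ℂ) * z) ^ n / n) 1).2 h1
    simpa using this
  have h2' : HasSum (fun n : ℕ => ((r : ℂ) * z⁻¹) ^ (n + 1) / (n + 1))
      (-Complex.log (1 - r * z⁻¹)) := by
    have := (hasSum_nat_add_iff' (f := fun n : ℕ => ((r : ℂ) * z⁻¹) ^ n / n) 1).2 h2
    simpa using this
  have hncast : ∀ n : ℕ, ((n : ℂ) + 1) ≠ 0 := fun n => Nat.cast_add_one_ne_zero n
  -- negative part
  have hneg : HasSum (fun n : ℕ => f (-(n + 1)))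
      ((r : ℂ) ^ (k : ℤ) * Complex.log (1 - (r : ℂ) * z⁻¹)) := by
    have hmul := (h2'.mul_left (-((r : ℂ) ^ (k : ℤ))))
    have heq : (fun n : ℕ => -((r : ℂ) ^ (k : ℤ)) * (((r : ℂ) * z⁻¹) ^ (n + 1) / ((n : ℂ) + 1)))
        = fun n : ℕ => f (-(n + 1)) := by
      funext n
      have hne : (-((n : ℤ) + 1)) ≠ 0 := by omega
      have hna : ((-((n : ℤ) + 1)) - (k : ℤ)).natAbs = (n + 1) + k := by omega
      rw [hf]
      simp only [if_neg hne, hna]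
      have hz1 : z ^ (-((n : ℤ) + 1)) = (z ^ (n + 1))⁻¹ := by
        rw [zpow_neg]
        norm_cast
      have hcast : (((-((n : ℤ) + 1)) : ℤ) : ℂ) = -((n : ℂ) + 1) := by push_cast; ring
      rw [hz1, hcast, zpow_natCast, pow_add, mul_pow, inv_pow]
      rw [div_neg]
      field_simp
      ring
    rw [← heq]
    convert hmul using 1
    · rfl
    ring
  -- positive part: auxiliary finite correction
  set S : ℂ := ∑ m ∈ Finset.Icc 1 k,
      ((r : ℂ) ^ ((k : ℤ) - (m : ℤ)) - (r : ℂ) ^ ((m : ℤ) - (k : ℤ))) * z ^ (m : ℕ) / (m : ℂ)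
    with hS
  set h : ℕ → ℂ := fun n =>
    if n < k then ((r : ℂ) ^ ((k : ℤ) - ((n : ℤ) + 1)) - (r : ℂ) ^ (((n : ℤ) + 1) - (k : ℤ)))
      * z ^ (n + 1) / ((n : ℂ) + 1) else 0 with hh
  have hsum_h : HasSum h S := by
    have hfin : HasSum h (∑ n ∈ Finset.range k, h n) := by
      apply hasSum_sum_of_ne_finset_zero
      intro n hn
      simp only [Finset.mem_range, not_lt] at hn
      simp [hh, Nat.not_lt.mpr hn]
    convert hfin using 1
    rw [hS]
    rw [show Finset.Icc 1 k = Finset.Ico 1 (k + 1) by rfl, Finset.sum_Ico_eq_sum_range]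
    simp only [Nat.add_sub_cancel]
    apply Finset.sum_congr rfl
    intro n hn
    simp only [Finset.mem_range] at hn
    simp only [hh, if_pos hn]
    push_cast
    ring_nf
  have hpos : HasSum (fun n : ℕ => f (n + 1))
      (S - (r : ℂ) ^ (-(k : ℤ)) * Complex.log (1 - (r : ℂ) * z)) := by
    have hgeo := h1'.mul_left ((r : ℂ) ^ (-(k : ℤ)))
    have htot := hgeo.add hsum_h
    have heq : (fun n : ℕ =>
          (r : ℂ) ^ (-(k : ℤ)) * (((r : ℂ) * z) ^ (n + 1) / ((n : ℂ) + 1)) + h n)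
        = fun n : ℕ => f ((n : ℤ) + 1) := by
      funext n
      have hne : ((n : ℤ) + 1) ≠ 0 := by omega
      rw [hf, hh]
      simp only [if_neg hne]
      have hcast : (((n : ℤ) + 1 : ℤ) : ℂ) = (n : ℂ) + 1 := by push_cast; ring
      have hzp : z ^ ((n : ℤ) + 1) = z ^ (n + 1) := by
        rw [show ((n : ℤ) + 1) = ((n + 1 : ℕ) : ℤ) by push_cast; ring, zpow_natCast]
      rw [hcast, hzp, mul_pow]
      by_cases hnk : n < k
      · simp only [if_pos hnk]
        have hna : (((n : ℤ) + 1) - (k : ℤ)).natAbs = k - (n + 1) := by omega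
        rw [hna]
        have hkeq : ((r : ℂ)) ^ ((k : ℤ) - ((n : ℤ) + 1)) = (r : ℂ) ^ (k - (n + 1)) := by
          rw [← zpow_natCast (r : ℂ) (k - (n + 1))]
          congr 1
          omega
        have hrexp : (r : ℂ) ^ (((n : ℤ) + 1) - (k : ℤ))
            = (r : ℂ) ^ (-(k : ℤ)) * (r : ℂ) ^ (n + 1) := by
          rw [← zpow_natCast (r : ℂ) (n + 1), ← zpow_add₀ hrC]
          congr 1
          push_cast
          ring
        rw [hkeq, hrexp]
        generalize (r : ℂ) ^ (-(k : ℤ)) = c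
        ring
      · simp only [if_neg hnk, add_zero]
        have hna : (((n : ℤ) + 1) - (k : ℤ)).natAbs = (n + 1) - k := by omega
        rw [hna]
        have hrexp : (r : ℂ) ^ ((n + 1) - k)
            = (r : ℂ) ^ (-(k : ℤ)) * (r : ℂ) ^ (n + 1) := by
          rw [← zpow_natCast (r : ℂ) (n + 1), ← zpow_add₀ hrC,
            ← zpow_natCast (r : ℂ) ((n + 1) - k)]
          congr 1
          omega
        rw [hrexp]
        generalize (r : ℂ) ^ (-(k : ℤ)) = c
        ring
    rw [← heq]
    convert htot using 1
    · rfl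
    ring
  have hzero : f 0 = 0 := by simp [hf]
  have hall := HasSum.of_add_one_of_neg_add_one hpos hneg
  rw [hzero] at hall
  convert hall using 1
  ring
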